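/- arXiv:1410.4686 — 8 statements merged into one kernel-verified Lean document; each statement's English description precedes it below -/
import Mathlib

section
/- Define h : P^n → P^{n−1} by h(p,q) := (x ⊗ (∫₀¹ q) − ∫₀ˣ q, 0); this pair indeed lies in P^{n−1} since its first component evaluates to 0 ∈ I^{n−1} at x = 0 and to 0 ∈ F^{n−1} at x = 1. Then h is a chain homotopy between s ∘ ev and the identity: for every n and every (p,q) ∈ P^n, d(h(p,q)) + h(d(p,q)) = s(ev(p,q)) − (p,q). -/
/-!
Setup: `(V, d)` is a cochain complex of `ℚ`-vector spaces indexed by `ℤ`, with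
subcomplexes `I, F ⊆ V`.  We model the graded pieces as submodules `V n, I n, F n`
of one ambient `ℚ`-vector space `A`, with one differential `d : A →ₗ[ℚ] A` that maps
`V n` into `V (n+1)` (and similarly for `I`, `F`).

Polynomials `ℚ[x] ⊗ V` with coefficients in `A` are modelled as finitely supported
functions `ℕ →₀ A`, where `p i` is the coefficient of `xⁱ`.
-/

variable {A : Type*} [AddCommGroup A] [Module ℚ A]

/-- Evaluation at `ε : ℚ` of a polynomial `∑ i, xⁱ ⊗ vᵢ`. -/
noncomputable def evalAt (ε : ℚ) : (ℕ →₀ A) →ₗ[ℚ] A :=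
  Finsupp.lsum ℚ fun i : ℕ => ε ^ i • (LinearMap.id : A →ₗ[ℚ] A)

/-- Formal derivative `∂ₓ` in the polynomial variable `x`. -/
noncomputable def polyDeriv : (ℕ →₀ A) →ₗ[ℚ] (ℕ →₀ A) :=
  Finsupp.lsum ℚ fun i : ℕ =>
    (Finsupp.lsingle (R := ℚ) (i - 1)).comp ((i : ℚ) • (LinearMap.id : A →ₗ[ℚ] A))

/-- Apply a linear map `d` to all coefficients (this is `d_V`). -/
noncomputable def coeffMap (d : A →ₗ[ℚ] A) : (ℕ →₀ A) →ₗ[ℚ] (ℕ →₀ A) :=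
  Finsupp.mapRange.linearMap d

/-- `∫₀¹ q := ∑ i, vᵢ / (i+1)`. -/
noncomputable def int01 : (ℕ →₀ A) →ₗ[ℚ] A :=
  Finsupp.lsum ℚ fun i : ℕ => ((i : ℚ) + 1)⁻¹ • (LinearMap.id : A →ₗ[ℚ] A)

/-- `∫₀ˣ q := ∑ i, x^(i+1)/(i+1) ⊗ vᵢ`. -/
noncomputable def int0x : (ℕ →₀ A) →ₗ[ℚ] (ℕ →₀ A) :=
  Finsupp.lsum ℚ fun i : ℕ =>
    (Finsupp.lsingle (R := ℚ) (i + 1)).comp (((i : ℚ) + 1)⁻¹ • (LinearMap.id : A →ₗ[ℚ] A))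

/-- Membership in degree `n` of the Deligne cone complex `Cⁿ = Iⁿ ⊕ Fⁿ ⊕ V^(n-1)`. -/
def MemC (I F V : ℤ → Submodule ℚ A) (n : ℤ) (x : A × A × A) : Prop :=
  x.1 ∈ I n ∧ x.2.1 ∈ F n ∧ x.2.2 ∈ V (n - 1)

/-- Membership in degree `n` of the Deligne path complex `Pⁿ`: a pair `(p, q)` with
`p ∈ ℚ[x] ⊗ Vⁿ`, `q ∈ ℚ[x] ⊗ V^(n-1)`, `p(0) ∈ Iⁿ` and `p(1) ∈ Fⁿ`. -/
def MemP (I F V : ℤ → Submodule ℚ A) (n : ℤ) (w : (ℕ →₀ A) × (ℕ →₀ A)) : Prop :=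
  (∀ i, w.1 i ∈ V n) ∧ (∀ i, w.2 i ∈ V (n - 1)) ∧
    evalAt 0 w.1 ∈ I n ∧ evalAt 1 w.1 ∈ F n

/-- Differential of the cone complex: `d (a, b, c) = (d a, d b, b - a - d c)`. -/
noncomputable def dCone (d : A →ₗ[ℚ] A) (x : A × A × A) : A × A × A :=
  (d x.1, d x.2.1, x.2.1 - x.1 - d x.2.2)

/-- Differential of the path complex: `d (p, q) = (d_V p, ∂ₓ p - d_V q)`. -/
noncomputable def dPath (d : A →ₗ[ℚ] A) (w : (ℕ →₀ A) × (ℕ →₀ A)) : (ℕ →₀ A) × (ℕ →₀ A) :=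
  (coeffMap d w.1, polyDeriv w.1 - coeffMap d w.2)

/-- The evaluation map `ev (p, q) = (p(0), p(1), ∫₀¹ q)`. -/
noncomputable def evMap : (ℕ →₀ A) × (ℕ →₀ A) → A × A × A :=
  fun w => (evalAt 0 w.1, evalAt 1 w.1, int01 w.2)

/-- The splitting `s (a, b, c) = ((1-x) ⊗ a + x ⊗ b, 1 ⊗ c)`. -/
noncomputable def sMap : A × A × A → (ℕ →₀ A) × (ℕ →₀ A) :=
  fun x => (Finsupp.single 0 x.1 + Finsupp.single 1 (x.2.1 - x.1), Finsupp.single 0 x.2.2)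

/-- The homotopy `h (p, q) := (x ⊗ (∫₀¹ q) - ∫₀ˣ q, 0)`. -/
noncomputable def hMap : (ℕ →₀ A) × (ℕ →₀ A) → (ℕ →₀ A) × (ℕ →₀ A) :=
  fun w => (Finsupp.single 1 (int01 w.2) - int0x w.2, 0)

lemma evalAt_single' (ε : ℚ) (i : ℕ) (v : A) : evalAt ε (Finsupp.single i v) = ε ^ i • v := by
  simp [evalAt]

lemma int01_single' (i : ℕ) (v : A) : int01 (Finsupp.single i v) = ((i : ℚ) + 1)⁻¹ • v := by
  simp [int01]

lemma int0x_single' (i : ℕ) (v : A) :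
    int0x (Finsupp.single i v) = Finsupp.single (i + 1) (((i : ℚ) + 1)⁻¹ • v) := by
  simp [int0x]

lemma polyDeriv_single' (i : ℕ) (v : A) :
    polyDeriv (Finsupp.single i v) = Finsupp.single (i - 1) ((i : ℚ) • v) := by
  simp [polyDeriv]

lemma coeffMap_single' (d : A →ₗ[ℚ] A) (i : ℕ) (v : A) :
    coeffMap d (Finsupp.single i v) = Finsupp.single i (d v) := by
  simp [coeffMap]

lemma eval0_int0x (q : ℕ →₀ A) : evalAt 0 (int0x q) = 0 := by
  induction q using Finsupp.induction_linear with
  | zero => simp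
  | add f g hf hg => simp [map_add, hf, hg]
  | single i v => simp [int0x_single', evalAt_single']

lemma eval1_int0x (q : ℕ →₀ A) : evalAt 1 (int0x q) = int01 q := by
  induction q using Finsupp.induction_linear with
  | zero => simp
  | add f g hf hg => simp [map_add, hf, hg]
  | single i v => simp [int0x_single', evalAt_single', int01_single']

lemma polyDeriv_int0x (q : ℕ →₀ A) : polyDeriv (int0x q) = q := by
  induction q using Finsupp.induction_linear with
  | zero => simp
  | add f g hf hg => simp [map_add, hf, hg]
  | single i v =>
      rw [int0x_single', polyDeriv_single']
      have h : ((i : ℚ) + 1) ≠ 0 := by positivity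
      simp [smul_smul, mul_inv_cancel₀, h]

lemma coeffMap_int0x (d : A →ₗ[ℚ] A) (q : ℕ →₀ A) :
    coeffMap d (int0x q) = int0x (coeffMap d q) := by
  induction q using Finsupp.induction_linear with
  | zero => simp
  | add f g hf hg => simp [map_add, hf, hg]
  | single i v => simp [int0x_single', coeffMap_single', map_smul]

lemma d_int01 (d : A →ₗ[ℚ] A) (q : ℕ →₀ A) : d (int01 q) = int01 (coeffMap d q) := by
  induction q using Finsupp.induction_linear with
  | zero => simp
  | add f g hf hg => simp [map_add, hf, hg]
  | single i v => simp [int01_single', coeffMap_single', map_smul]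

lemma int01_polyDeriv (p : ℕ →₀ A) : int01 (polyDeriv p) = evalAt 1 p - evalAt 0 p := by
  induction p using Finsupp.induction_linear with
  | zero => simp
  | add f g hf hg => simp [map_add, hf, hg]; abel
  | single i v =>
      rw [polyDeriv_single', int01_single', evalAt_single', evalAt_single']
      cases i with
      | zero => simp
      | succ j =>
          have h : ((j : ℚ) + 1) ≠ 0 := by positivity
          simp [smul_smul, inv_mul_cancel₀, h]

lemma int0x_polyDeriv (p : ℕ →₀ A) :
    int0x (polyDeriv p) = p - Finsupp.single 0 (evalAt 0 p) := by
  induction p using Finsupp.induction_linear with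
  | zero => simp
  | add f g hf hg => simp [map_add, hf, hg, Finsupp.single_add]; abel
  | single i v =>
      rw [polyDeriv_single', int0x_single', evalAt_single']
      cases i with
      | zero => simp
      | succ j =>
          have h : ((j : ℚ) + 1) ≠ 0 := by positivity
          simp [smul_smul, inv_mul_cancel₀, h]

lemma int01_mem {S : Submodule ℚ A} {q : ℕ →₀ A} (h : ∀ i, q i ∈ S) : int01 q ∈ S := by
  rw [int01, Finsupp.lsum_apply]
  exact Submodule.sum_mem _ fun i _ => Submodule.smul_mem _ _ (h i)

lemma evalAt_mem {S : Submodule ℚ A} (ε : ℚ) {p : ℕ →₀ A} (h : ∀ i, p i ∈ S) :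
    evalAt ε p ∈ S := by
  rw [evalAt, Finsupp.lsum_apply]
  exact Submodule.sum_mem _ fun i _ => Submodule.smul_mem _ _ (h i)

lemma int0x_mem {S : Submodule ℚ A} {q : ℕ →₀ A} (h : ∀ i, q i ∈ S) (j : ℕ) :
    int0x q j ∈ S := by
  rw [int0x, Finsupp.lsum_apply, Finsupp.sum, Finsupp.finset_sum_apply]
  refine Submodule.sum_mem _ fun i _ => ?_
  simp only [LinearMap.comp_apply, Finsupp.lsingle_apply, LinearMap.smul_apply, LinearMap.id_apply]
  rw [Finsupp.single_apply]
  split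
  · exact Submodule.smul_mem _ _ (h i)
  · exact Submodule.zero_mem _


/-- `h` maps `Pⁿ` into `P^(n-1)` (its first component evaluates to
`0 ∈ I^(n-1)` at `x = 0` and to `0 ∈ F^(n-1)` at `x = 1`), and `h` is a chain homotopy
between `s ∘ ev` and the identity: `d(h w) + h(d w) = s(ev w) - w`. -/
theorem h_is_homotopy
    (V I F : ℤ → Submodule ℚ A) (d : A →ₗ[ℚ] A)
    (hd2 : ∀ a : A, d (d a) = 0)
    (hIV : ∀ n, I n ≤ V n) (hFV : ∀ n, F n ≤ V n)
    (hdV : ∀ n, ∀ a ∈ V n, d a ∈ V (n + 1))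
    (hdI : ∀ n, ∀ a ∈ I n, d a ∈ I (n + 1))
    (hdF : ∀ n, ∀ a ∈ F n, d a ∈ F (n + 1)) :
    ∀ (n : ℤ) (w : (ℕ →₀ A) × (ℕ →₀ A)), MemP I F V n w →
      (evalAt 0 (hMap w).1 = 0 ∧ evalAt 1 (hMap w).1 = 0 ∧ MemP I F V (n - 1) (hMap w)) ∧
      dPath d (hMap w) + hMap (dPath d w) = sMap (evMap w) - w := by
  intro n w hw
  obtain ⟨p, q⟩ := w
  obtain ⟨hp, hq, hI0, hF1⟩ := hw
  have he0 : evalAt 0 (hMap (p, q)).1 = 0 := by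
    simp [hMap, map_sub, evalAt_single', eval0_int0x]
  have he1 : evalAt 1 (hMap (p, q)).1 = 0 := by
    simp [hMap, map_sub, evalAt_single', eval1_int0x]
  refine ⟨⟨he0, he1, ?_, ?_, ?_, ?_⟩, ?_⟩
  · intro i
    simp only [hMap, Finsupp.sub_apply]
    refine sub_mem ?_ (int0x_mem hq i)
    rw [Finsupp.single_apply]
    split
    · exact int01_mem hq
    · exact Submodule.zero_mem _
  · intro i; simp only [hMap]; simp only [Finsupp.coe_zero, Pi.zero_apply]
    exact Submodule.zero_mem _
  · rw [he0]; exact Submodule.zero_mem _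
  · rw [he1]; exact Submodule.zero_mem _
  · simp only [Prod.mk_add_mk, Prod.mk_sub_mk, dPath, hMap, sMap, evMap, Prod.ext_iff]
    constructor
    · simp only [map_sub, coeffMap_single', coeffMap_int0x, d_int01, int01_polyDeriv,
        int0x_polyDeriv, Finsupp.single_sub]
      abel
    · simp only [map_sub, map_zero, polyDeriv_single', polyDeriv_int0x, Nat.cast_one,
        one_smul, Finsupp.single_sub]
      abel
end

section
/- For every α ∈ ℚ, Beilinson's product ∪_α on the Deligne cone complex satisfies the Leibniz rule with respect to the cone differential: for all x ∈ C^r and y ∈ C^s, d(x ∪_α y) = (dx) ∪_α y + (−1)^r x ∪_α (dy) in C^{r+s+1}. -/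
/-!
Setup: `(V, d)` is a cochain complex of `ℚ`-vector spaces indexed by `ℤ`, with
subcomplexes `I, F ⊆ V`.  We model the graded pieces as submodules `V n, I n, F n`
of one ambient `ℚ`-vector space `A`, with one differential `d : A →ₗ[ℚ] A` that maps
`V n` into `V (n+1)` (and similarly for `I`, `F`).

Polynomials `ℚ[x] ⊗ V` with coefficients in `A` are modelled as finitely supported
functions `ℕ →₀ A`, where `p i` is the coefficient of `xⁱ`.
-/

variable {A : Type*} [AddCommGroup A] [Module ℚ A]

/-- Beilinson's product `∪_α` on the Deligne cone complex; `r` is the (cohomological)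
degree of the first factor.  `μ` is the graded product of the underlying complex `V`. -/
noncomputable def cup (μ : A →ₗ[ℚ] A →ₗ[ℚ] A) (α : ℚ) (r : ℤ) (x y : A × A × A) :
    A × A × A :=
  (μ x.1 y.1, μ x.2.1 y.2.1,
    ((1 - α) * (-1 : ℚ) ^ r) • μ x.1 y.2.2 + (α * (-1 : ℚ) ^ r) • μ x.2.1 y.2.2 +
      α • μ x.2.2 y.1 + (1 - α) • μ x.2.2 y.2.1)

/-- For every `α : ℚ`, Beilinson's product `∪_α` satisfies the Leibniz
rule with respect to the cone differential:
`d(x ∪_α y) = (d x) ∪_α y + (-1)^r • (x ∪_α (d y))` for `x ∈ C^r`, `y ∈ C^s`. -/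
theorem cup_leibniz
    (V I F : ℤ → Submodule ℚ A) (d : A →ₗ[ℚ] A) (μ : A →ₗ[ℚ] A →ₗ[ℚ] A)
    (hd2 : ∀ a : A, d (d a) = 0)
    (hIV : ∀ n, I n ≤ V n) (hFV : ∀ n, F n ≤ V n)
    (hdV : ∀ n, ∀ a ∈ V n, d a ∈ V (n + 1))
    (hdI : ∀ n, ∀ a ∈ I n, d a ∈ I (n + 1))
    (hdF : ∀ n, ∀ a ∈ F n, d a ∈ F (n + 1))
    (hgrade : ∀ (r s : ℤ), ∀ a ∈ V r, ∀ b ∈ V s, μ a b ∈ V (r + s))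
    (hgradeI : ∀ (r s : ℤ), ∀ a ∈ I r, ∀ b ∈ I s, μ a b ∈ I (r + s))
    (hgradeF : ∀ (r s : ℤ), ∀ a ∈ F r, ∀ b ∈ F s, μ a b ∈ F (r + s))
    (hLeib : ∀ (r : ℤ), ∀ u ∈ V r, ∀ v : A,
      d (μ u v) = μ (d u) v + ((-1 : ℚ) ^ r) • μ u (d v)) :
    ∀ (α : ℚ) (r s : ℤ) (x y : A × A × A), MemC I F V r x → MemC I F V s y →
      dCone d (cup μ α r x y) =
        cup μ α (r + 1) (dCone d x) y + ((-1 : ℚ) ^ r) • cup μ α r x (dCone d y) := by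
  intro α r s x y hx hy
  obtain ⟨a, b, c⟩ := x
  obtain ⟨a', b', c'⟩ := y
  obtain ⟨ha, hb, hc⟩ := hx
  obtain ⟨ha', hb', hc'⟩ := hy
  have hVa : a ∈ V r := hIV r ha
  have hVb : b ∈ V r := hFV r hb
  have hVc : c ∈ V (r - 1) := hc
  have e1 := hLeib r a hVa a'
  have e2 := hLeib r b hVb b'
  have e3 := hLeib r a hVa c'
  have e4 := hLeib r b hVb c'
  have e5 := hLeib (r - 1) c hVc a'
  have e6 := hLeib (r - 1) c hVc b'
  have hp : ((-1 : ℚ) ^ (r + 1)) = -(-1 : ℚ) ^ r := by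
    rw [zpow_add_one₀ (by norm_num : (-1 : ℚ) ≠ 0)]; ring
  have hm : ((-1 : ℚ) ^ (r - 1)) = -(-1 : ℚ) ^ r := by
    rw [zpow_sub_one₀ (by norm_num : (-1 : ℚ) ≠ 0)]; ring
  rw [hm] at e5 e6
  simp only [dCone, cup, Prod.mk.injEq, Prod.smul_mk, Prod.mk_add_mk, map_add, map_sub,
    map_smul, LinearMap.add_apply, LinearMap.sub_apply, LinearMap.smul_apply, hp,
    e1, e2, e3, e4, e5, e6, smul_add, smul_sub, smul_smul]
  have hsq : ((-1 : ℚ) ^ r) * ((-1 : ℚ) ^ r) = 1 := by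
    rw [← zpow_add₀ (by norm_num : (-1 : ℚ) ≠ 0)]
    exact Even.neg_one_zpow ⟨r, rfl⟩
  refine ⟨trivial, trivial, ?_⟩
  match_scalars <;>
    first
      | ring1
      | linear_combination (1 - α) * hsq
      | linear_combination α * hsq
      | linear_combination (α - 1) * hsq
      | linear_combination (-α) * hsq
      | linear_combination hsq
      | linear_combination (-1 : ℚ) * hsq
end

section
/- If the graded product on V^• is associative, then Beilinson's products ∪_0 and ∪_1 on the Deligne cone complex are associative: for α ∈ {0,1} and all x ∈ C^r, y ∈ C^s, z ∈ C^t, one has (x ∪_α y) ∪_α z = x ∪_α (y ∪_α z). -/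
/-!
Setup: `(V, d)` is a cochain complex of `ℚ`-vector spaces indexed by `ℤ`, with
subcomplexes `I, F ⊆ V`.  We model the graded pieces as submodules `V n, I n, F n`
of one ambient `ℚ`-vector space `A`, with one differential `d : A →ₗ[ℚ] A` that maps
`V n` into `V (n+1)` (and similarly for `I`, `F`).

Polynomials `ℚ[x] ⊗ V` with coefficients in `A` are modelled as finitely supported
functions `ℕ →₀ A`, where `p i` is the coefficient of `xⁱ`.
-/

variable {A : Type*} [AddCommGroup A] [Module ℚ A]

/-- If the graded product on `V` is associative, then Beilinson's
products `∪_0` and `∪_1` are associative on the Deligne cone complex. -/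
theorem cup_assoc
    (V I F : ℤ → Submodule ℚ A) (d : A →ₗ[ℚ] A) (μ : A →ₗ[ℚ] A →ₗ[ℚ] A)
    (hd2 : ∀ a : A, d (d a) = 0)
    (hIV : ∀ n, I n ≤ V n) (hFV : ∀ n, F n ≤ V n)
    (hdV : ∀ n, ∀ a ∈ V n, d a ∈ V (n + 1))
    (hdI : ∀ n, ∀ a ∈ I n, d a ∈ I (n + 1))
    (hdF : ∀ n, ∀ a ∈ F n, d a ∈ F (n + 1))
    (hgrade : ∀ (r s : ℤ), ∀ a ∈ V r, ∀ b ∈ V s, μ a b ∈ V (r + s))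
    (hgradeI : ∀ (r s : ℤ), ∀ a ∈ I r, ∀ b ∈ I s, μ a b ∈ I (r + s))
    (hgradeF : ∀ (r s : ℤ), ∀ a ∈ F r, ∀ b ∈ F s, μ a b ∈ F (r + s))
    (hLeib : ∀ (r : ℤ), ∀ u ∈ V r, ∀ v : A,
      d (μ u v) = μ (d u) v + ((-1 : ℚ) ^ r) • μ u (d v))
    (hassoc : ∀ a b c : A, μ (μ a b) c = μ a (μ b c)) :
    ∀ α : ℚ, (α = 0 ∨ α = 1) →
      ∀ (r s t : ℤ) (x y z : A × A × A),
        MemC I F V r x → MemC I F V s y → MemC I F V t z →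
        cup μ α (r + s) (cup μ α r x y) z = cup μ α r x (cup μ α s y z) := by
  rintro α (rfl | rfl) r s t ⟨a, b, c⟩ ⟨a', b', c'⟩ ⟨a'', b'', c''⟩ _ _ _ <;>
    refine Prod.ext (hassoc _ _ _) (Prod.ext (hassoc _ _ _) ?_) <;>
    simp only [cup, map_add, map_smul, LinearMap.add_apply, LinearMap.smul_apply,
      hassoc, zpow_add₀ (by norm_num : (-1 : ℚ) ≠ 0)] <;>
    module
end

section
/- If the graded product on V^• is graded-commutative, i.e. uv = (−1)^{rs} vu for all u ∈ V^r and v ∈ V^s, then Beilinson's product for the parameter α = 1/2 is graded-commutative on the Deligne cone complex: for all x ∈ C^r and y ∈ C^s, x ∪_{1/2} y = (−1)^{rs} y ∪_{1/2} x. -/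
/-!
Setup: `(V, d)` is a cochain complex of `ℚ`-vector spaces indexed by `ℤ`, with
subcomplexes `I, F ⊆ V`.  We model the graded pieces as submodules `V n, I n, F n`
of one ambient `ℚ`-vector space `A`, with one differential `d : A →ₗ[ℚ] A` that maps
`V n` into `V (n+1)` (and similarly for `I`, `F`).

Polynomials `ℚ[x] ⊗ V` with coefficients in `A` are modelled as finitely supported
functions `ℕ →₀ A`, where `p i` is the coefficient of `xⁱ`.
-/

variable {A : Type*} [AddCommGroup A] [Module ℚ A]

private lemma negOne_zpow_congr {a b : ℤ} (k : ℤ) (h : a = b + 2 * k) :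
    ((-1 : ℚ)) ^ a = (-1 : ℚ) ^ b := by
  subst h
  rw [zpow_add₀ (by norm_num : (-1:ℚ) ≠ 0), zpow_mul]
  norm_num

/-- If the graded product on `V` is graded-commutative
(`u v = (-1)^(r s) • (v u)` for `u ∈ V^r`, `v ∈ V^s`), then Beilinson's product for the
parameter `α = 1/2` is graded-commutative on the Deligne cone complex:
`x ∪ y = (-1)^(r s) • (y ∪ x)` for `x ∈ C^r`, `y ∈ C^s`. -/
theorem cup_half_graded_comm
    (V I F : ℤ → Submodule ℚ A) (d : A →ₗ[ℚ] A) (μ : A →ₗ[ℚ] A →ₗ[ℚ] A)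
    (hd2 : ∀ a : A, d (d a) = 0)
    (hIV : ∀ n, I n ≤ V n) (hFV : ∀ n, F n ≤ V n)
    (hdV : ∀ n, ∀ a ∈ V n, d a ∈ V (n + 1))
    (hdI : ∀ n, ∀ a ∈ I n, d a ∈ I (n + 1))
    (hdF : ∀ n, ∀ a ∈ F n, d a ∈ F (n + 1))
    (hgrade : ∀ (r s : ℤ), ∀ a ∈ V r, ∀ b ∈ V s, μ a b ∈ V (r + s))
    (hgradeI : ∀ (r s : ℤ), ∀ a ∈ I r, ∀ b ∈ I s, μ a b ∈ I (r + s))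
    (hgradeF : ∀ (r s : ℤ), ∀ a ∈ F r, ∀ b ∈ F s, μ a b ∈ F (r + s))
    (hLeib : ∀ (r : ℤ), ∀ u ∈ V r, ∀ v : A,
      d (μ u v) = μ (d u) v + ((-1 : ℚ) ^ r) • μ u (d v))
    (hcomm : ∀ (r s : ℤ), ∀ u ∈ V r, ∀ v ∈ V s, μ u v = ((-1 : ℚ) ^ (r * s)) • μ v u) :
    ∀ (r s : ℤ) (x y : A × A × A), MemC I F V r x → MemC I F V s y →
      cup μ (1/2) r x y = ((-1 : ℚ) ^ (r * s)) • cup μ (1/2) s y x := by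
  intro r s x y hx hy
  obtain ⟨hx1, hx2, hx3⟩ := hx
  obtain ⟨hy1, hy2, hy3⟩ := hy
  have hne : (-1:ℚ) ≠ 0 := by norm_num
  have e1 := hcomm r s x.1 (hIV r hx1) y.1 (hIV s hy1)
  have e2 := hcomm r s x.2.1 (hFV r hx2) y.2.1 (hFV s hy2)
  have e3 := hcomm r (s-1) x.1 (hIV r hx1) y.2.2 hy3
  have e4 := hcomm r (s-1) x.2.1 (hFV r hx2) y.2.2 hy3
  have e5 := hcomm (r-1) s x.2.2 hx3 y.1 (hIV s hy1)
  have e6 := hcomm (r-1) s x.2.2 hx3 y.2.1 (hFV s hy2)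
  have k1 : (-1:ℚ)^r * (-1:ℚ)^(r*(s-1)) = (-1:ℚ)^(r*s) := by
    rw [← zpow_add₀ hne]; congr 1; ring
  have k2 : (-1:ℚ)^((r-1)*s) = (-1:ℚ)^(r*s) * (-1:ℚ)^s := by
    rw [← zpow_add₀ hne]; exact negOne_zpow_congr (-s) (by ring)
  simp only [cup, Prod.mk.injEq, Prod.smul_mk]
  refine ⟨by rw [e1], by rw [e2], ?_⟩
  rw [show (1 - 1/2 : ℚ) = 1/2 by norm_num]
  rw [e3, e4, e5, e6]
  simp only [smul_smul, mul_assoc, k1, k2]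
  module
end

section
/- Any two of Beilinson's products are chain homotopic, and in particular induce the same product on cohomology: for all α, β ∈ ℚ and all cocycles x = (a,b,c) ∈ C^r and y = (ã,b̃,c̃) ∈ C^s (i.e. dx = 0 and dy = 0), one has x ∪_α y − x ∪_β y = d(0, 0, (β−α)(−1)^r c c̃) in C^{r+s}. -/
/-!
Setup: `(V, d)` is a cochain complex of `ℚ`-vector spaces indexed by `ℤ`, with
subcomplexes `I, F ⊆ V`.  We model the graded pieces as submodules `V n, I n, F n`
of one ambient `ℚ`-vector space `A`, with one differential `d : A →ₗ[ℚ] A` that maps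
`V n` into `V (n+1)` (and similarly for `I`, `F`).

Polynomials `ℚ[x] ⊗ V` with coefficients in `A` are modelled as finitely supported
functions `ℕ →₀ A`, where `p i` is the coefficient of `xⁱ`.
-/

variable {A : Type*} [AddCommGroup A] [Module ℚ A]

/-- Any two of Beilinson's products are chain homotopic: for cocycles
`x = (a,b,c) ∈ C^r` and `y = (ã,b̃,c̃) ∈ C^s`,
`x ∪_α y - x ∪_β y = d (0, 0, (β-α)·(-1)^r • (c c̃))`.
In particular all products `∪_α` induce the same product on cohomology. -/
theorem cup_homotopic
    (V I F : ℤ → Submodule ℚ A) (d : A →ₗ[ℚ] A) (μ : A →ₗ[ℚ] A →ₗ[ℚ] A)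
    (hd2 : ∀ a : A, d (d a) = 0)
    (hIV : ∀ n, I n ≤ V n) (hFV : ∀ n, F n ≤ V n)
    (hdV : ∀ n, ∀ a ∈ V n, d a ∈ V (n + 1))
    (hdI : ∀ n, ∀ a ∈ I n, d a ∈ I (n + 1))
    (hdF : ∀ n, ∀ a ∈ F n, d a ∈ F (n + 1))
    (hgrade : ∀ (r s : ℤ), ∀ a ∈ V r, ∀ b ∈ V s, μ a b ∈ V (r + s))
    (hgradeI : ∀ (r s : ℤ), ∀ a ∈ I r, ∀ b ∈ I s, μ a b ∈ I (r + s))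
    (hgradeF : ∀ (r s : ℤ), ∀ a ∈ F r, ∀ b ∈ F s, μ a b ∈ F (r + s))
    (hLeib : ∀ (r : ℤ), ∀ u ∈ V r, ∀ v : A,
      d (μ u v) = μ (d u) v + ((-1 : ℚ) ^ r) • μ u (d v)) :
    ∀ (α β : ℚ) (r s : ℤ) (x y : A × A × A),
      MemC I F V r x → MemC I F V s y → dCone d x = 0 → dCone d y = 0 →
      cup μ α r x y - cup μ β r x y =
        dCone d ((0 : A), (0 : A), ((β - α) * (-1 : ℚ) ^ r) • μ x.2.2 y.2.2) := by

  intro α β r s x y hx hy hdx hdy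
  have hda : d x.1 = 0 := congrArg Prod.fst hdx
  have hdb : d x.2.1 = 0 := congrArg (fun z => z.2.1) hdx
  have hb : x.2.1 = x.1 + d x.2.2 := by
    have h := congrArg (fun z => z.2.2) hdx
    simp only [dCone] at h
    rw [sub_sub] at h
    exact sub_eq_zero.mp h
  have hb' : y.2.1 = y.1 + d y.2.2 := by
    have h := congrArg (fun z => z.2.2) hdy
    simp only [dCone] at h
    rw [sub_sub] at h
    exact sub_eq_zero.mp h
  have hc : x.2.2 ∈ V (r - 1) := hx.2.2
  have hL := hLeib (r - 1) x.2.2 hc y.2.2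
  have hpow : ((-1 : ℚ)) ^ (r - 1) = -(-1 : ℚ) ^ r := by
    rw [zpow_sub₀ (by norm_num : (-1:ℚ) ≠ 0), zpow_one]
    ring
  rw [hpow] at hL
  refine Prod.ext ?_ (Prod.ext ?_ ?_)
  · simp [cup, dCone]
  · simp [cup, dCone]
  · simp only [dCone, cup, Prod.snd_sub, Prod.fst_sub]
    rw [map_smul, hL, hb, hb']
    simp only [map_add, map_zero, LinearMap.add_apply, zero_sub, sub_zero]
    have h2 : (-1:ℚ) ^ r * (-1:ℚ) ^ r = 1 := by
      rw [← zpow_add₀ (by norm_num : (-1:ℚ) ≠ 0), ← two_mul, zpow_mul]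
      norm_num
    match_scalars
    all_goals try ring
    all_goals linear_combination (α - β) * h2
end

section
/- Let α and β be finite types and f : α → β a function. Consider the action of the group Perm(α) of permutations of α on the set of functions α → β given by σ · g := g ∘ σ⁻¹. Then the stabilizer of f under this action is a subgroup of Perm(α) of cardinality ∏_{b ∈ β} (|f⁻¹(b)|)!, the product over all b ∈ β of the factorials of the cardinalities of the fibers f⁻¹(b) = {a ∈ α : f(a) = b}. -/
/-- The action of the permutation group of `α` on functions `α → β`: `σ • g = g ∘ σ⁻¹`. -/
instance permArrowSMul {α β : Type*} : SMul (Equiv.Perm α) (α → β) :=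
  ⟨fun σ g => g ∘ ⇑σ⁻¹⟩

instance permArrowAction {α β : Type*} : MulAction (Equiv.Perm α) (α → β) where
  one_smul g := rfl
  mul_smul σ τ g := rfl

/-- For finite types `α`, `β` and `f : α → β`, the stabilizer of `f`
under the action `σ • f = f ∘ σ⁻¹` of `Perm α` on `α → β` is a subgroup of `Perm α`
of cardinality `∏_{b : β} |f⁻¹(b)|!`. -/
theorem card_stabilizer_comp_perm {α β : Type*} [Fintype α] [Fintype β] (f : α → β) :
    Nat.card (MulAction.stabilizer (Equiv.Perm α) f) =
      ∏ b : β, Nat.factorial (Nat.card {a : α // f a = b}) := by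
  classical
  have key : Nat.card (MulAction.stabilizer (Equiv.Perm α) f) =
      Nat.card {g : Equiv.Perm α // f ∘ g = f} := by
    apply Nat.card_congr
    refine Equiv.subtypeEquiv (Equiv.inv (Equiv.Perm α)) fun σ => ?_
    simp only [MulAction.mem_stabilizer_iff, Equiv.inv_apply]
    constructor
    · intro h; exact h
    · intro h; exact h
  rw [key, Nat.card_eq_fintype_card, DomMulAct.stabilizer_card]
  exact Finset.prod_congr rfl fun b _ => by rw [Nat.card_eq_fintype_card]
end

section
/- The improper Riemann/Lebesgue integral ∫_{−∞}^0 ( log(1−t)/(t(t−1)) + log(1−1/t)/(1−t) ) dt equals π²/3. (This is the term A = ∫_{−∞}^0 [log(1−z) d log(1−1/z) − log(1−1/z) d log(1−z)] in the computation of the regulator of the Totaro cycle at parameter a = 1.) -/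
open Real MeasureTheory

section TotaroAux
open Filter Set Topology intervalIntegral

noncomputable def totF : ℝ → ℝ := fun s => Real.log (1 + s) / s
noncomputable def totL : ℝ → ℝ := fun u => ∫ s in (0:ℝ)..u, totF s
noncomputable def totG : ℝ → ℝ := fun u => 2 * totL u - Real.log u * Real.log (1 + u)

lemma totF_meas : Measurable totF :=
  (Real.measurable_log.comp (measurable_const.add measurable_id)).div measurable_id

lemma totF_nonneg {s : ℝ} (hs : 0 ≤ s) : 0 ≤ totF s := by
  rcases eq_or_lt_of_le hs with h | h
  · simp [totF, ← h]
  · exact div_nonneg (Real.log_nonneg (by linarith)) hs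

lemma totF_le_one {s : ℝ} (hs : 0 ≤ s) : totF s ≤ 1 := by
  rcases eq_or_lt_of_le hs with h | h
  · simp [totF, ← h]
  · rw [totF, div_le_one h]
    have h1 : Real.log (1 + s) ≤ (1 + s) - 1 := Real.log_le_sub_one_of_pos (by linarith)
    linarith

lemma totF_intInt {b : ℝ} (hb : 0 ≤ b) : IntervalIntegrable totF volume 0 b := by
  rw [intervalIntegrable_iff_integrableOn_Ioc_of_le hb]
  apply Measure.integrableOn_of_bounded (M := 1)
  · simp [Real.volume_Ioc]
  · exact totF_meas.aestronglyMeasurable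
  · filter_upwards [ae_restrict_mem measurableSet_Ioc] with s hs
    rw [Real.norm_eq_abs, abs_of_nonneg (totF_nonneg hs.1.le)]
    exact totF_le_one hs.1.le

lemma totF_contAt {u : ℝ} (hu : 0 < u) : ContinuousAt totF u := by
  apply ContinuousAt.div
  · exact (Real.continuousAt_log (by positivity)).comp
      ((continuous_const.add continuous_id).continuousAt)
  · exact continuousAt_id
  · exact hu.ne'

lemma totL_hasDeriv {u : ℝ} (hu : 0 < u) : HasDerivAt totL (totF u) u :=
  intervalIntegral.integral_hasDerivAt_right (totF_intInt hu.le)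
    ⟨Set.univ, univ_mem, totF_meas.aestronglyMeasurable.restrict⟩ (totF_contAt hu)

lemma totL_nonneg {u : ℝ} (hu : 0 ≤ u) : 0 ≤ totL u :=
  intervalIntegral.integral_nonneg hu (fun s hs => totF_nonneg hs.1)

lemma totL_le {u : ℝ} (hu : 0 ≤ u) : totL u ≤ u := by
  have h := intervalIntegral.integral_mono_on hu (totF_intInt hu) intervalIntegrable_const
    (fun s hs => totF_le_one hs.1)
  simpa [totL] using h

lemma totSum : HasSum (fun n : ℕ => (-1 : ℝ)^n / ((n : ℝ)+1)^2) (π^2/12) := by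
  set f : ℕ → ℝ := fun n => 1 / (n:ℝ)^2 with hf
  have hS : HasSum f (π^2/6) := hasSum_zeta_two
  have heven : HasSum (fun k : ℕ => f (2*k)) (π^2/24) := by
    have h := hS.mul_left (1/4)
    have he : (fun k : ℕ => f (2*k)) = fun n : ℕ => (1/4) * (1 / (n:ℝ)^2) := by
      funext k
      rcases Nat.eq_zero_or_pos k with rfl | hk
      · simp [hf]
      · have hk' : ((k:ℝ))^2 ≠ 0 := by positivity
        simp only [hf]
        push_cast
        field_simp
        ring
    rw [he]
    rwa [show (π : ℝ)^2/24 = 1/4 * (π^2/6) by ring]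
  have hinj : Function.Injective (fun k : ℕ => 2*k+1) := fun a b h => by
    simp only [] at h; omega
  have hoddsum : Summable (fun k : ℕ => f (2*k+1)) := hS.summable.comp_injective hinj
  obtain ⟨T, hodd⟩ := hoddsum
  have htot : HasSum f (π^2/24 + T) := HasSum.even_add_odd heven hodd
  have hTval : T = π^2/8 := by have := hS.unique htot; linarith
  rw [hTval] at hodd
  have heven' : HasSum (fun k : ℕ => f (2*(k+1))) (π^2/24) := by
    have h0 : HasSum (fun k : ℕ => f (2*k))
        (π^2/24 + ∑ i ∈ Finset.range 1, f (2*i)) := by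
      simpa [hf] using heven
    exact (hasSum_nat_add_iff (f := fun k : ℕ => f (2*k)) 1).2 h0
  set g : ℕ → ℝ := fun n => (-1 : ℝ)^n / ((n : ℝ)+1)^2 with hg
  have heg : HasSum (fun k : ℕ => g (2*k)) (π^2/8) := by
    refine hodd.congr_fun fun k => ?_
    simp only [hg, hf]
    push_cast
    rw [pow_mul]
    norm_num
  have hog : HasSum (fun k : ℕ => g (2*k+1)) (-(π^2/24)) := by
    refine heven'.neg.congr_fun fun k => ?_
    simp only [hg, hf]
    push_cast
    rw [pow_succ, pow_mul]
    norm_num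
    ring
  have h : HasSum g (π^2/8 + -(π^2/24)) := HasSum.even_add_odd heg hog
  rwa [show (π:ℝ)^2/8 + -(π^2/24) = π^2/12 by ring] at h

lemma totF_hasSum {s : ℝ} (h0 : 0 < s) (h1 : s < 1) :
    HasSum (fun n : ℕ => (-1:ℝ)^n * s^n / ((n:ℝ)+1)) (totF s) := by
  have habs : |(-s)| < 1 := by rw [abs_neg, abs_of_pos h0]; exact h1
  have h2 := (Real.hasSum_pow_div_log_of_abs_lt_one habs).mul_right (-s)⁻¹
  have hval : -Real.log (1 - -s) * (-s)⁻¹ = totF s := by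
    rw [totF, sub_neg_eq_add, inv_neg, mul_neg, neg_mul, neg_neg, ← div_eq_mul_inv]
  rw [hval] at h2
  refine h2.congr_fun (fun n => ?_)
  have hs : s ≠ 0 := h0.ne'
  rw [pow_succ, neg_pow]
  field_simp
  ring

lemma totL_one : totL 1 = π^2/12 := by
  set Fn : ℕ → ℝ → ℝ := fun n s => (-1:ℝ)^n * s^n / ((n:ℝ)+1) with hFn
  have hcont : ∀ n, Continuous (Fn n) := fun n => by
    exact (continuous_const.mul (continuous_pow n)).div_const _
  have hint : ∀ n : ℕ, Integrable (Fn n) (volume.restrict (Set.Ioo (0:ℝ) 1)) := fun n =>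
    ((hcont n).integrableOn_Icc).mono_set Set.Ioo_subset_Icc_self
  have hval : ∀ n : ℕ, ∫ s in Set.Ioo (0:ℝ) 1, Fn n s = (-1:ℝ)^n / ((n:ℝ)+1)^2 := by
    intro n
    rw [← integral_Ioc_eq_integral_Ioo, ← intervalIntegral.integral_of_le zero_le_one]
    have : ∀ s, Fn n s = ((-1:ℝ)^n / ((n:ℝ)+1)) * s^n := fun s => by rw [hFn]; ring
    simp_rw [this]
    rw [intervalIntegral.integral_const_mul, integral_pow]
    have : ((n:ℝ)+1) ≠ 0 := by positivity
    field_simp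
    ring
  have hnorm : ∀ n : ℕ, ∫ s in Set.Ioo (0:ℝ) 1, ‖Fn n s‖ = 1 / ((n:ℝ)+1)^2 := by
    intro n
    have hcg : ∀ s ∈ Set.Ioo (0:ℝ) 1, ‖Fn n s‖ = (1 / ((n:ℝ)+1)) * s^n := by
      intro s hs
      rw [hFn, Real.norm_eq_abs, abs_div, abs_mul, abs_pow, abs_pow, abs_neg, abs_one,
        one_pow, abs_of_pos hs.1, abs_of_pos (by positivity : (0:ℝ) < (n:ℝ)+1)]
      ring
    rw [setIntegral_congr_fun measurableSet_Ioo hcg]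
    rw [← integral_Ioc_eq_integral_Ioo, ← intervalIntegral.integral_of_le zero_le_one]
    rw [intervalIntegral.integral_const_mul, integral_pow]
    have : ((n:ℝ)+1) ≠ 0 := by positivity
    field_simp
    ring
  have hsum : Summable (fun n : ℕ => ∫ s in Set.Ioo (0:ℝ) 1, ‖Fn n s‖) := by
    apply Summable.congr _ (fun n => (hnorm n).symm)
    apply totSum.summable.abs.congr
    intro n
    rw [abs_div, abs_pow, abs_neg, abs_one, one_pow, abs_pow,
      abs_of_pos (by positivity : (0:ℝ) < (n:ℝ)+1)]
  have hkey := hasSum_integral_of_summable_integral_norm hint hsum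
  have heq : ∫ s in Set.Ioo (0:ℝ) 1, (∑' n, Fn n s) = totL 1 := by
    rw [totL, intervalIntegral.integral_of_le zero_le_one, integral_Ioc_eq_integral_Ioo]
    refine setIntegral_congr_fun measurableSet_Ioo (fun s hs => ?_)
    exact (totF_hasSum hs.1 hs.2).tsum_eq
  rw [heq] at hkey
  have hkey2 : HasSum (fun n : ℕ => (-1:ℝ)^n / ((n:ℝ)+1)^2) (totL 1) :=
    hkey.congr_fun (fun n => (hval n).symm)
  exact hkey2.unique totSum
lemma totH_deriv {x : ℝ} (hx : 0 < x) :
    HasDerivAt (fun u => totL u + totL (1/u) - (Real.log u)^2/2) 0 x := by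
  have h1 : HasDerivAt (fun u : ℝ => totL (1/u)) (totF (1/x) * (-(1/x^2))) x := by
    have hinv : HasDerivAt (fun u : ℝ => 1/u) (-(1/x^2)) x := by
      simpa [one_div] using (hasDerivAt_inv hx.ne')
    exact (totL_hasDeriv (by positivity)).comp x hinv
  have h2 : HasDerivAt (fun u : ℝ => (Real.log u)^2/2) (Real.log x * x⁻¹) x := by
    have := ((Real.hasDerivAt_log hx.ne').fun_pow 2).div_const 2
    refine this.congr_deriv ?_
    norm_num
    ring
  have h3 := ((totL_hasDeriv hx).fun_add h1).fun_sub h2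
  refine h3.congr_deriv ?_
  have hx1 : (0:ℝ) < 1 + x := by linarith
  have hinv1 : (1:ℝ) + 1/x = (x+1)/x := by field_simp
  rw [totF, totF, hinv1, Real.log_div (by positivity) hx.ne']
  have : Real.log (1 + x) = Real.log (x + 1) := by ring_nf
  rw [this]
  field_simp
  ring

lemma totL_inv {u : ℝ} (hu : 0 < u) :
    totL u + totL (1/u) - (Real.log u)^2/2 = 2 * totL 1 := by
  have key : ∀ x ∈ Set.uIcc 1 u, HasDerivAt (fun u => totL u + totL (1/u) - (Real.log u)^2/2)
      ((fun _ : ℝ => (0:ℝ)) x) x := by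
    intro x hx
    have hx0 : 0 < x := by
      rcases Set.mem_uIcc.1 hx with ⟨h, _⟩ | ⟨h, _⟩ <;> [linarith; linarith [hu]]
    exact totH_deriv hx0
  have h := intervalIntegral.integral_eq_sub_of_hasDerivAt key
    (_root_.intervalIntegrable_const (c := (0:ℝ)))
  simp only [intervalIntegral.integral_const, smul_zero, smul_eq_mul, mul_zero] at h
  have h1 : Real.log 1 = 0 := Real.log_one
  rw [eq_comm, sub_eq_zero] at h
  rw [h]
  simp [h1]
  ring

lemma totG_tendsto : Filter.Tendsto totG Filter.atTop (nhds (π^2/3)) := by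
  have heq : ∀ᶠ u in Filter.atTop, totG u
      = 4 * totL 1 - 2 * totL (1/u) - Real.log u * Real.log (1 + 1/u) := by
    filter_upwards [Filter.eventually_gt_atTop (0:ℝ)] with u hu
    have hinv := totL_inv hu
    have hlog : Real.log (1 + u) = Real.log u + Real.log (1 + 1/u) := by
      rw [show (1:ℝ) + u = u * (1 + 1/u) by field_simp; ring, Real.log_mul hu.ne' (by positivity)]
    rw [totG, hlog]
    nlinarith [hinv]
  have t1 : Filter.Tendsto (fun u : ℝ => totL (1/u)) Filter.atTop (nhds 0) := by
    apply squeeze_zero' (g := fun u : ℝ => 1/u)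
    · filter_upwards [Filter.eventually_gt_atTop (0:ℝ)] with u hu
      exact totL_nonneg (by positivity)
    · filter_upwards [Filter.eventually_gt_atTop (0:ℝ)] with u hu
      exact totL_le (by positivity)
    · simpa [one_div] using tendsto_inv_atTop_zero (𝕜 := ℝ)
  have t2 : Filter.Tendsto (fun u : ℝ => Real.log u * Real.log (1 + 1/u))
      Filter.atTop (nhds 0) := by
    apply squeeze_zero' (g := fun u : ℝ => Real.log u * (1/u))
    · filter_upwards [Filter.eventually_ge_atTop (1:ℝ)] with u hu
      have h1 : (0:ℝ) < u := by linarith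
      exact mul_nonneg (Real.log_nonneg hu) (Real.log_nonneg (le_add_of_nonneg_right (by positivity)))
    · filter_upwards [Filter.eventually_ge_atTop (1:ℝ)] with u hu
      have h1 : (0:ℝ) < u := by linarith
      have hb : Real.log (1 + 1/u) ≤ 1/u := by
        have := Real.log_le_sub_one_of_pos (show (0:ℝ) < 1 + 1/u by positivity)
        linarith
      exact mul_le_mul_of_nonneg_left hb (Real.log_nonneg hu)
    · have := Real.isLittleO_log_id_atTop.tendsto_div_nhds_zero
      refine this.congr (fun u => ?_)
      simp [div_eq_mul_inv, one_div]
  have tfin : Filter.Tendsto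
      (fun u : ℝ => 4 * totL 1 - 2 * totL (1/u) - Real.log u * Real.log (1 + 1/u))
      Filter.atTop (nhds (π^2/3)) := by
    have := (tendsto_const_nhds (x := 4 * totL 1) (f := Filter.atTop (α := ℝ))).sub
      ((t1.const_mul 2).sub t2 |>.congr (fun u => rfl)) 
    have h := ((t1.const_mul 2).add t2)
    have h2 := (tendsto_const_nhds (x := 4 * totL 1) (f := Filter.atTop (α := ℝ))).sub h
    simp only [mul_zero, add_zero] at h2
    have : 4 * totL 1 - 0 = π^2/3 := by rw [totL_one]; ring
    rw [this] at h2
    refine h2.congr (fun u => ?_)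
    ring
  exact tfin.congr' (Filter.EventuallyEq.symm heq)
lemma totG_deriv {u : ℝ} (hu : 0 < u) :
    HasDerivAt totG (Real.log (1+u)/u - Real.log u/(1+u)) u := by
  have hlog1 : HasDerivAt (fun u : ℝ => Real.log (1+u)) (1/(1+u)) u := by
    have h := ((hasDerivAt_id u).const_add 1).log (by positivity : (0:ℝ) < 1+u).ne'
    simpa using h
  have h2 := (Real.hasDerivAt_log hu.ne').fun_mul hlog1
  have h3 := ((totL_hasDeriv hu).const_mul 2).fun_sub h2
  refine h3.congr_deriv ?_
  rw [totF]
  field_simp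
  ring

lemma totg_nonneg {u : ℝ} (hu : 0 < u) :
    0 ≤ Real.log (1+u)/u - Real.log u/(1+u) := by
  rw [sub_nonneg, div_le_div_iff₀ (by linarith) hu]
  rcases le_total u 1 with h | h
  · have h1 : Real.log u ≤ 0 := Real.log_nonpos hu.le h
    have h2 : 0 ≤ Real.log (1+u) := Real.log_nonneg (by linarith)
    nlinarith
  · have h1 : 0 ≤ Real.log u := Real.log_nonneg h
    have h2 : Real.log u ≤ Real.log (1+u) := Real.log_le_log hu (by linarith)
    nlinarith

lemma totG_zero : totG 0 = 0 := by
  rw [totG, totL]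
  simp [intervalIntegral.integral_same]

lemma totG_cont : ContinuousWithinAt totG (Set.Ici 0) 0 := by
  have hins : Set.Ici (0:ℝ) = insert 0 (Set.Ioi 0) := by
    rw [Set.Ioi_insert]
  rw [hins, continuousWithinAt_insert_self]
  rw [ContinuousWithinAt, totG_zero]
  have t1 : Filter.Tendsto totL (nhdsWithin 0 (Set.Ioi 0)) (nhds 0) := by
    apply squeeze_zero' (g := fun u : ℝ => u)
    · filter_upwards [self_mem_nhdsWithin] with u hu
      exact totL_nonneg (le_of_lt hu)
    · filter_upwards [self_mem_nhdsWithin] with u hu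
      exact totL_le (le_of_lt hu)
    · exact Filter.tendsto_id.mono_left nhdsWithin_le_nhds
  have t2 : Filter.Tendsto (fun u : ℝ => Real.log u * Real.log (1+u))
      (nhdsWithin 0 (Set.Ioi 0)) (nhds 0) := by
    apply squeeze_zero_norm' (a := fun u : ℝ => -(Real.log u * u))
    · filter_upwards [Ioo_mem_nhdsGT_of_mem
        (by norm_num : (0:ℝ) ∈ Set.Ico (0:ℝ) 1)] with u hu
      have h0 : 0 < u := hu.1
      have h1 : u < 1 := hu.2
      have hlu : Real.log u ≤ 0 := Real.log_nonpos h0.le h1.le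
      have hl1 : 0 ≤ Real.log (1+u) := Real.log_nonneg (by linarith)
      have hle : Real.log (1+u) ≤ u := by
        have := Real.log_le_sub_one_of_pos (show (0:ℝ) < 1+u by linarith)
        linarith
      rw [Real.norm_eq_abs, abs_mul, abs_of_nonpos hlu, abs_of_nonneg hl1]
      nlinarith
    · have h := (tendsto_log_mul_rpow_nhdsGT_zero one_pos).neg
      rw [neg_zero] at h
      refine h.congr (fun u => ?_)
      rw [Real.rpow_one]
  have hcomb := (t1.const_mul 2).sub t2
  simp only [mul_zero, sub_zero] at hcomb
  exact hcomb

lemma tot_key : ∫ u in Set.Ioi (0:ℝ), (Real.log (1+u)/u - Real.log u/(1+u)) = π^2/3 := by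
  have h := integral_Ioi_of_hasDerivAt_of_nonneg totG_cont
    (fun x hx => totG_deriv hx) (fun x hx => totg_nonneg hx) totG_tendsto
  rw [h, totG_zero, sub_zero]

end TotaroAux

/-- The improper integral
`∫_{-∞}^0 (log(1-t)/(t(t-1)) + log(1-1/t)/(1-t)) dt = π²/3`; this is the term
`A = ∫_{-∞}^0 [log(1-z) d log(1-1/z) - log(1-1/z) d log(1-z)]` in the computation of
the regulator of the Totaro cycle at the parameter `a = 1`. -/
theorem integral_totaro_A :
    ∫ t in Set.Iio (0 : ℝ),
        (Real.log (1 - t) / (t * (t - 1)) + Real.log (1 - 1 / t) / (1 - t)) =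
      Real.pi ^ 2 / 3 := by
  have hswap : (∫ t in Set.Iio (0:ℝ),
      (Real.log (1 - t) / (t * (t - 1)) + Real.log (1 - 1 / t) / (1 - t)))
      = ∫ u in Set.Ioi (0:ℝ), (Real.log (1+u)/u - Real.log u/(1+u)) := by
    rw [← MeasureTheory.integral_Iic_eq_integral_Iio,
      show Set.Iic (0:ℝ) = Set.Iic (-0) by norm_num,
      ← _root_.integral_comp_neg_Ioi]
    refine setIntegral_congr_fun measurableSet_Ioi (fun u hu => ?_)
    have hu0 : (0:ℝ) < u := hu
    have e1 : (1:ℝ) - -u = 1 + u := by ring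
    have e2 : (1:ℝ) - 1/(-u) = (u+1)/u := by
      rw [div_neg, sub_neg_eq_add]
      field_simp
    rw [e1, e2, Real.log_div (by positivity) hu0.ne']
    have e3 : Real.log (u+1) = Real.log (1+u) := by ring_nf
    rw [e3]
    rw [show -u * (-u - 1) = u * (u+1) by ring]
    have h1 : (1:ℝ) + u ≠ 0 := by positivity
    have h2 : (u:ℝ) + 1 ≠ 0 := by positivity
    field_simp
    ring
  rw [hswap, tot_key]
end

section
/- The improper Riemann/Lebesgue integral ∫₁^∞ ( log t/(t(t−1)) − log(1−1/t)/t ) dt equals π²/3. (This is the term C = ∫_∞^1 [log(1−1/z) d log z − log z d log(1−1/z)], with orientation reversed, in the computation of the regulator of the Totaro cycle at parameter a = 1.) -/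
open Real MeasureTheory Set Filter Topology

namespace TotaroC

noncomputable def f (n : ℕ) (t : ℝ) : ℝ := (Real.log t + 1 / (n + 1)) / t ^ (n + 2)

noncomputable def F (n : ℕ) (t : ℝ) : ℝ :=
  -(((n : ℝ) + 1) * Real.log t + 2) / (((n : ℝ) + 1) ^ 2 * t ^ (n + 1))

lemma hasDeriv (n : ℕ) {x : ℝ} (hx : x ∈ Ici (1 : ℝ)) : HasDerivAt (F n) (f n x) x := by
  have hx0 : (0 : ℝ) < x := lt_of_lt_of_le one_pos hx
  have hxne : x ≠ 0 := hx0.ne'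
  have h1 : HasDerivAt (fun t : ℝ => -(((n : ℝ) + 1) * Real.log t + 2))
      (-(((n : ℝ) + 1) * x⁻¹)) x :=
    ((((hasDerivAt_log hxne).const_mul ((n : ℝ) + 1))).add_const 2).neg
  have h2 : HasDerivAt (fun t : ℝ => (((n : ℝ) + 1) ^ 2 * t ^ (n + 1)))
      (((n : ℝ) + 1) ^ 2 * ((n + 1 : ℕ) * x ^ n)) x := (hasDerivAt_pow (n + 1) x).const_mul _
  have h3 := h1.div h2 (by positivity)
  refine h3.congr_deriv ?_
  unfold f
  have hc : ((n : ℝ) + 1) ≠ 0 := by positivity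
  field_simp
  push_cast
  ring

lemma f_nonneg (n : ℕ) {x : ℝ} (hx : x ∈ Ioi (1 : ℝ)) : 0 ≤ f n x := by
  have hx1 : (1 : ℝ) ≤ x := le_of_lt hx
  have hlog : 0 ≤ Real.log x := Real.log_nonneg hx1
  have : (0:ℝ) < x := lt_of_lt_of_le one_pos hx1
  unfold f
  positivity

lemma F_tendsto (n : ℕ) : Tendsto (F n) atTop (𝓝 0) := by
  have hc : (0 : ℝ) < (n : ℝ) + 1 := by positivity
  have hlog : Tendsto (fun x : ℝ => Real.log x / x) atTop (𝓝 0) := by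
    simpa using Real.tendsto_pow_log_div_mul_add_atTop 1 0 1 one_ne_zero
  have hinv : Tendsto (fun x : ℝ => x⁻¹) atTop (𝓝 (0:ℝ)) := tendsto_inv_atTop_zero
  have hb : Tendsto (fun x : ℝ => (1 / ((n:ℝ)+1)) * (Real.log x / x) + (2 / ((n:ℝ)+1)^2) * x⁻¹)
      atTop (𝓝 ((1 / ((n:ℝ)+1)) * 0 + (2 / ((n:ℝ)+1)^2) * 0)) :=
    ((hlog.const_mul _).add (hinv.const_mul _))
  rw [mul_zero, mul_zero, add_zero] at hb
  have hbneg := hb.neg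
  rw [neg_zero] at hbneg
  refine tendsto_of_tendsto_of_tendsto_of_le_of_le' hbneg tendsto_const_nhds ?_ ?_
  · filter_upwards [eventually_ge_atTop (1:ℝ)] with x hx1
    have hx0 : (0:ℝ) < x := lt_of_lt_of_le one_pos hx1
    have hlg : 0 ≤ Real.log x := Real.log_nonneg hx1
    have hxp : x ≤ x ^ (n + 1) := le_self_pow₀ hx1 (Nat.succ_ne_zero n)
    have key : (((n : ℝ) + 1) * Real.log x + 2) / (((n : ℝ) + 1) ^ 2 * x ^ (n + 1))
        ≤ (((n : ℝ) + 1) * Real.log x + 2) / (((n : ℝ) + 1) ^ 2 * x) := by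
      gcongr
    have hEq : (1 / ((n:ℝ)+1)) * (Real.log x / x) + (2 / ((n:ℝ)+1)^2) * x⁻¹
        = (((n : ℝ) + 1) * Real.log x + 2) / (((n : ℝ) + 1) ^ 2 * x) := by
      field_simp
    unfold F
    rw [neg_div, neg_le_neg_iff, hEq]
    exact key
  · filter_upwards [eventually_ge_atTop (1:ℝ)] with x hx1
    have hx0 : (0:ℝ) < x := lt_of_lt_of_le one_pos hx1
    have hlg : 0 ≤ Real.log x := Real.log_nonneg hx1
    unfold F
    rw [neg_div]
    have : 0 ≤ (((n : ℝ) + 1) * Real.log x + 2) / (((n : ℝ) + 1) ^ 2 * x ^ (n + 1)) := by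
      positivity
    linarith

lemma f_integral (n : ℕ) : ∫ t in Ioi (1:ℝ), f n t = 2 / ((n : ℝ) + 1) ^ 2 := by
  have h := integral_Ioi_of_hasDerivAt_of_nonneg' (g := F n) (g' := f n) (a := 1)
    (fun x hx => hasDeriv n hx) (fun x hx => f_nonneg n hx) (F_tendsto n)
  rw [h]
  unfold F
  simp [Real.log_one]
  ring

lemma f_integrableOn (n : ℕ) : IntegrableOn (f n) (Ioi (1:ℝ)) :=
  integrableOn_Ioi_deriv_of_nonneg' (fun x hx => hasDeriv n hx)
    (fun x hx => f_nonneg n hx) (F_tendsto n)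

lemma f_hasSum {t : ℝ} (ht : 1 < t) :
    HasSum (fun n => f n t)
      (Real.log t / (t * (t - 1)) - Real.log (1 - 1 / t) / t) := by
  have ht0 : (0:ℝ) < t := lt_trans one_pos ht
  have htne : t ≠ 0 := ht0.ne'
  have hr0 : (0:ℝ) ≤ 1 / t := by positivity
  have hr1 : 1 / t < 1 := by rw [div_lt_one ht0]; exact ht
  have habs : |1 / t| < 1 := by rwa [abs_of_nonneg hr0]
  have hA := (hasSum_geometric_of_lt_one hr0 hr1).mul_left (Real.log t / t ^ 2)
  have hB := (hasSum_pow_div_log_of_abs_lt_one habs).div_const t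
  have hAB := hA.add hB
  have hne1 : t - 1 ≠ 0 := sub_ne_zero.2 (ne_of_gt ht)
  have hne2 : 1 - 1 / t ≠ 0 := by
    rw [sub_ne_zero]; exact fun h => (ne_of_lt hr1) h.symm
  have hterm : (fun b : ℕ => Real.log t / t ^ 2 * (1 / t) ^ b + (1 / t) ^ (b + 1) / (↑b + 1) / t)
      = fun n => f n t := by
    funext n
    unfold f
    rw [div_pow, div_pow, one_pow, one_pow]
    have htp : t ^ n ≠ 0 := pow_ne_zero _ htne
    have hc : ((n:ℝ) + 1) ≠ 0 := by positivity
    field_simp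
    ring
  rw [hterm] at hAB
  have hval : Real.log t / t ^ 2 * (1 - 1 / t)⁻¹ + -Real.log (1 - 1 / t) / t
      = Real.log t / (t * (t - 1)) - Real.log (1 - 1 / t) / t := by
    rw [neg_div, ← sub_eq_add_neg]
    congr 1
    rw [div_mul_eq_mul_div, div_eq_div_iff (by positivity) (by positivity)]
    field_simp
  rwa [hval] at hAB

end TotaroC

/-- The improper integral
`∫₁^∞ (log t/(t(t-1)) - log(1-1/t)/t) dt = π²/3`; this is the term
`C = ∫_∞^1 [log(1-1/z) d log z - log z d log(1-1/z)]`, with orientation reversed, in the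
computation of the regulator of the Totaro cycle at the parameter `a = 1`. -/
theorem integral_totaro_C :
    ∫ t in Set.Ioi (1 : ℝ),
        (Real.log t / (t * (t - 1)) - Real.log (1 - 1 / t) / t) =
      Real.pi ^ 2 / 3 := by
  have hsum2 : HasSum (fun n : ℕ => 2 / ((n:ℝ)+1)^2) (Real.pi^2/3) := by
    have h0 : HasSum (fun n : ℕ => 1/((n:ℝ)+1)^2) (Real.pi^2/6) := by
      have := (hasSum_nat_add_iff' (f := fun n : ℕ => 1/(n:ℝ)^2) 1).2 hasSum_zeta_two
      simpa using this
    have h1 := h0.mul_left 2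
    convert h1 using 1
    · rfl
    · funext n; ring
    · ring
  have hint : ∀ n : ℕ, Integrable (TotaroC.f n) (volume.restrict (Set.Ioi 1)) :=
    fun n => TotaroC.f_integrableOn n
  have hnorm : ∀ n : ℕ, (∫ t in Set.Ioi (1:ℝ), ‖TotaroC.f n t‖) = 2/((n:ℝ)+1)^2 := by
    intro n
    rw [← TotaroC.f_integral n]
    refine setIntegral_congr_fun measurableSet_Ioi fun t ht => ?_
    exact Real.norm_of_nonneg (TotaroC.f_nonneg n ht)
  have hsumm : Summable fun n : ℕ => ∫ t in Set.Ioi (1:ℝ), ‖TotaroC.f n t‖ := by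
    simp only [hnorm]; exact hsum2.summable
  have key := MeasureTheory.integral_tsum_of_summable_integral_norm hint hsumm
  have h1 : (∫ t in Set.Ioi (1:ℝ), (∑' n, TotaroC.f n t)) = Real.pi^2/3 := by
    rw [← key]
    have heq : (fun n : ℕ => ∫ t in Set.Ioi (1:ℝ), TotaroC.f n t)
        = fun n : ℕ => 2/((n:ℝ)+1)^2 := funext TotaroC.f_integral
    rw [heq, hsum2.tsum_eq]
  rw [← h1]
  refine setIntegral_congr_fun measurableSet_Ioi fun t ht => ?_
  exact ((TotaroC.f_hasSum ht).tsum_eq).symm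
end
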